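/- For 0 ≤ Ω < 1, let I(y) = 1/√(Ω+(1−Ω)y³) and let q = q(Ω) > 1 be the unique solution of q·I(q) = ∫₁^q I(y) dy. Then q(Ω) is strictly increasing as a function of Ω on [0,1), and in particular q(Ω) ≥ 9/4 for all Ω ∈ [0,1). -/

import Mathlib

open Real intervalIntegral Set

noncomputable def Efun (Ω y : ℝ) : ℝ := Ω + (1 - Ω) * y ^ 3

lemma E_ge_one {Ω y : ℝ} (hΩ0 : 0 ≤ Ω) (hΩ1 : Ω ≤ 1) (hy : 1 ≤ y) :
    1 ≤ Efun Ω y := by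
  have h3 : 1 ≤ y ^ 3 := one_le_pow₀ hy
  unfold Efun; nlinarith

lemma E_pos {Ω y : ℝ} (hΩ0 : 0 ≤ Ω) (hΩ1 : Ω ≤ 1) (hy : 1 ≤ y) :
    0 < Efun Ω y := lt_of_lt_of_le one_pos (E_ge_one hΩ0 hΩ1 hy)

lemma sqrtE_pos {Ω y : ℝ} (hΩ0 : 0 ≤ Ω) (hΩ1 : Ω ≤ 1) (hy : 1 ≤ y) :
    0 < Real.sqrt (Efun Ω y) := Real.sqrt_pos.2 (E_pos hΩ0 hΩ1 hy)

lemma E_mono {Ω a b : ℝ} (hΩ1 : Ω ≤ 1) (ha : 0 ≤ a) (hab : a ≤ b) :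
    Efun Ω a ≤ Efun Ω b := by
  have : a ^ 3 ≤ b ^ 3 := pow_le_pow_left₀ ha hab 3
  unfold Efun; nlinarith

lemma Icont {Ω : ℝ} (hΩ0 : 0 ≤ Ω) (hΩ1 : Ω ≤ 1) {a b : ℝ} (ha : 1 ≤ a) :
    ContinuousOn (fun y => 1 / Real.sqrt (Efun Ω y)) (Icc a b) := by
  apply ContinuousOn.div continuousOn_const
  · exact (Real.continuous_sqrt.comp (by unfold Efun; continuity)).continuousOn
  · intro y hy
    exact (sqrtE_pos hΩ0 hΩ1 (le_trans ha hy.1)).ne'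

lemma Iintegrable {Ω : ℝ} (hΩ0 : 0 ≤ Ω) (hΩ1 : Ω ≤ 1) {a b : ℝ} (ha : 1 ≤ a) (hab : a ≤ b) :
    IntervalIntegrable (fun y => 1 / Real.sqrt (Efun Ω y)) MeasureTheory.volume a b :=
  (Icont hΩ0 hΩ1 ha).intervalIntegrable_of_Icc hab

noncomputable def Phi (Ω p : ℝ) : ℝ :=
  Real.sqrt (Efun Ω p) * (∫ y in (1:ℝ)..p, 1 / Real.sqrt (Efun Ω y)) - p

lemma Phi_mono {Ω p₁ p₂ : ℝ} (hΩ0 : 0 ≤ Ω) (hΩ1 : Ω ≤ 1) (h1 : 1 ≤ p₁) (h12 : p₁ ≤ p₂) :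
    Phi Ω p₁ ≤ Phi Ω p₂ := by
  have h1' : (1:ℝ) ≤ p₂ := le_trans h1 h12
  have hi1 := Iintegrable hΩ0 hΩ1 le_rfl h1
  have hi2 := Iintegrable hΩ0 hΩ1 h1 h12
  have hsplit := integral_add_adjacent_intervals hi1 hi2
  unfold Phi
  rw [← hsplit]
  set A := ∫ y in (1:ℝ)..p₁, 1 / Real.sqrt (Efun Ω y) with hA
  set B := ∫ y in p₁..p₂, 1 / Real.sqrt (Efun Ω y) with hB
  have hAnn : 0 ≤ A := by
    apply intervalIntegral.integral_nonneg h1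
    intro y hy; positivity
  have hE12 : Real.sqrt (Efun Ω p₁) ≤ Real.sqrt (Efun Ω p₂) :=
    Real.sqrt_le_sqrt (E_mono hΩ1 (by linarith) h12)
  have hs2pos : 0 < Real.sqrt (Efun Ω p₂) := sqrtE_pos hΩ0 hΩ1 h1'
  have htail : (p₂ - p₁) * (1 / Real.sqrt (Efun Ω p₂)) ≤ B := by
    have := intervalIntegral.integral_mono_on h12
      (_root_.intervalIntegrable_const (c := 1 / Real.sqrt (Efun Ω p₂))) hi2
      (fun y hy => by
        have hy1 : 1 ≤ y := le_trans h1 hy.1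
        have : Real.sqrt (Efun Ω y) ≤ Real.sqrt (Efun Ω p₂) :=
          Real.sqrt_le_sqrt (E_mono hΩ1 (by linarith) hy.2)
        exact one_div_le_one_div_of_le (sqrtE_pos hΩ0 hΩ1 hy1) this)
    simpa [hB, smul_eq_mul] using this
  have hBge : p₂ - p₁ ≤ Real.sqrt (Efun Ω p₂) * B := by
    have h2 := mul_le_mul_of_nonneg_left htail hs2pos.le
    have : Real.sqrt (Efun Ω p₂) * ((p₂ - p₁) * (1 / Real.sqrt (Efun Ω p₂))) = p₂ - p₁ := by
      field_simp
    linarith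
  have hAB : Real.sqrt (Efun Ω p₁) * A ≤ Real.sqrt (Efun Ω p₂) * A :=
    mul_le_mul_of_nonneg_right hE12 hAnn
  nlinarith [hAB, hBge]

lemma Phi_strictΩ {Ω₁ Ω₂ p : ℝ} (h0 : 0 ≤ Ω₁) (h12 : Ω₁ < Ω₂) (h2 : Ω₂ ≤ 1) (hp : 1 < p) :
    Phi Ω₂ p < Phi Ω₁ p := by
  have h0' : (0:ℝ) ≤ Ω₂ := le_trans h0 h12.le
  have h1' : Ω₁ ≤ 1 := le_trans h12.le h2
  unfold Phi
  have hpull : ∀ Ω : ℝ, Real.sqrt (Efun Ω p) * (∫ y in (1:ℝ)..p, 1 / Real.sqrt (Efun Ω y))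
      = ∫ y in (1:ℝ)..p, Real.sqrt (Efun Ω p) * (1 / Real.sqrt (Efun Ω y)) := by
    intro Ω
    rw [← intervalIntegral.integral_const_mul]
  rw [hpull, hpull]
  have key : (∫ y in (1:ℝ)..p, Real.sqrt (Efun Ω₂ p) * (1 / Real.sqrt (Efun Ω₂ y)))
      < ∫ y in (1:ℝ)..p, Real.sqrt (Efun Ω₁ p) * (1 / Real.sqrt (Efun Ω₁ y)) := by
    apply intervalIntegral.integral_lt_integral_of_continuousOn_of_le_of_exists_lt hp
    · exact (continuousOn_const.mul (Icont h0' h2 le_rfl))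
    · exact (continuousOn_const.mul (Icont h0 h1' le_rfl))
    · intro y hy
      have hy1 : 1 ≤ y := hy.1.le
      have hyp : y ≤ p := hy.2
      have hy0 : 0 ≤ y := by linarith
      have hy3 : y ^ 3 ≤ p ^ 3 := pow_le_pow_left₀ hy0 hyp 3
      have hE : Efun Ω₂ p * Efun Ω₁ y ≤ Efun Ω₁ p * Efun Ω₂ y := by
        unfold Efun; nlinarith [mul_nonneg (sub_nonneg.2 h12.le) (sub_nonneg.2 hy3)]
      have hs1y := sqrtE_pos h0 h1' hy1
      have hs2y := sqrtE_pos h0' h2 hy1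
      rw [mul_one_div, mul_one_div, div_le_div_iff₀ hs2y hs1y, ← Real.sqrt_mul (E_pos h0' h2 hp.le).le,
        ← Real.sqrt_mul (E_pos h0 h1' hp.le).le]
      exact Real.sqrt_le_sqrt hE
    · refine ⟨1, ⟨le_rfl, hp.le⟩, ?_⟩
      have hE1 : ∀ Ω : ℝ, Efun Ω 1 = 1 := by intro Ω; unfold Efun; ring
      have hlt : Efun Ω₂ p < Efun Ω₁ p := by
        have hp3 : 1 < p ^ 3 := one_lt_pow₀ hp (by norm_num)
        unfold Efun; nlinarith
      rw [hE1, hE1]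
      simp only [Real.sqrt_one, div_one, mul_one]
      exact (Real.sqrt_lt_sqrt (E_pos h0' h2 hp.le).le hlt)
  linarith

lemma q_at_zero {Q : ℝ} (hQ1 : 1 < Q)
    (heq : Q * (1 / Real.sqrt (0 + (1 - 0) * Q ^ 3)) =
      ∫ y in (1:ℝ)..Q, 1 / Real.sqrt (0 + (1 - 0) * y ^ 3)) : Q = 9/4 := by
  have hQ0 : (0:ℝ) < Q := by linarith
  have hcube : ∀ y : ℝ, 0 < y → Real.sqrt (0 + (1 - 0) * y ^ 3) = y * Real.sqrt y := by
    intro y hy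
    rw [show (0:ℝ) + (1-0)*y^3 = y^2 * y by ring, Real.sqrt_mul (by positivity),
      Real.sqrt_sq hy.le]
  have hderiv : ∀ y ∈ Set.uIcc (1:ℝ) Q,
      HasDerivAt (fun t => -2 / Real.sqrt t) (1 / Real.sqrt (0 + (1 - 0) * y ^ 3)) y := by
    intro y hy
    rw [Set.uIcc_of_le hQ1.le] at hy
    have hy0 : 0 < y := by have := hy.1; linarith
    have hsy : 0 < Real.sqrt y := Real.sqrt_pos.2 hy0
    have h2 := (hasDerivAt_const y (-2:ℝ)).div (Real.hasDerivAt_sqrt hy0.ne') hsy.ne'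
    have h3 : HasDerivAt (fun t => -2 / Real.sqrt t)
        ((0 * Real.sqrt y - -2 * (1 / (2 * Real.sqrt y))) / Real.sqrt y ^ 2) y := h2
    convert h3 using 1
    rw [Real.sq_sqrt hy0.le, hcube y hy0]
    field_simp
    ring
  have hint : IntervalIntegrable (fun y => 1 / Real.sqrt (0 + (1 - 0) * y ^ 3))
      MeasureTheory.volume 1 Q := by
    apply ContinuousOn.intervalIntegrable
    rw [Set.uIcc_of_le hQ1.le]
    apply ContinuousOn.div continuousOn_const
    · exact (Real.continuous_sqrt.comp (by continuity)).continuousOn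
    · intro y hy
      have hy0 : 0 < y := by have := hy.1; linarith
      rw [hcube y hy0]; positivity
  have hI := intervalIntegral.integral_eq_sub_of_hasDerivAt hderiv hint
  rw [hI, Real.sqrt_one, hcube Q hQ0] at heq
  have hsQ : 0 < Real.sqrt Q := Real.sqrt_pos.2 hQ0
  have hs32 : Real.sqrt Q = 3/2 := by
    field_simp at heq
    nlinarith [heq]
  have := Real.sq_sqrt hQ0.le
  rw [hs32] at this
  nlinarith [this]


theorem stmt_12 (q : ℝ → ℝ)
    (hq : ∀ Ω ∈ Set.Ico (0:ℝ) 1, 1 < q Ω ∧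
      q Ω * (1 / Real.sqrt (Ω + (1 - Ω) * (q Ω) ^ 3)) =
        ∫ y in (1:ℝ)..(q Ω), 1 / Real.sqrt (Ω + (1 - Ω) * y ^ 3)) :
    StrictMonoOn q (Set.Ico (0:ℝ) 1) ∧ ∀ Ω ∈ Set.Ico (0:ℝ) 1, 9/4 ≤ q Ω := by
  have hroot : ∀ Ω ∈ Set.Ico (0:ℝ) 1, Phi Ω (q Ω) = 0 := by
    intro Ω hΩ
    obtain ⟨hQ1, heq⟩ := hq Ω hΩ
    have hs : 0 < Real.sqrt (Efun Ω (q Ω)) := sqrtE_pos hΩ.1 hΩ.2.le hQ1.le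
    unfold Phi
    simp only [Efun] at hs ⊢
    rw [← heq]
    field_simp
    ring
  have hmono : StrictMonoOn q (Set.Ico (0:ℝ) 1) := by
    intro Ω₁ h₁ Ω₂ h₂ h12
    obtain ⟨hQ1, _⟩ := hq Ω₁ h₁
    obtain ⟨hQ2, _⟩ := hq Ω₂ h₂
    by_contra hle
    push_neg at hle
    have ha : Phi Ω₂ (q Ω₂) ≤ Phi Ω₂ (q Ω₁) := Phi_mono h₂.1 h₂.2.le hQ2.le hle
    have hb : Phi Ω₂ (q Ω₁) < Phi Ω₁ (q Ω₁) := Phi_strictΩ h₁.1 h12 h₂.2.le hQ1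
    rw [hroot Ω₁ h₁] at hb
    rw [hroot Ω₂ h₂] at ha
    linarith
  refine ⟨hmono, ?_⟩
  have h0mem : (0:ℝ) ∈ Set.Ico (0:ℝ) 1 := by norm_num
  obtain ⟨hQ1, heq⟩ := hq 0 h0mem
  have hq0 : q 0 = 9/4 := q_at_zero hQ1 heq
  intro Ω hΩ
  rcases eq_or_lt_of_le hΩ.1 with h | h
  · rw [← h, hq0]
  · have := hmono h0mem hΩ h
    rw [hq0] at this
    linarith
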